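/- For every integer k ≥ 1, ∑_{j=1}^{∞} (−1)^{j−1}/j^k = ∑_{n=1}^{∞} H_n^{(k−1)} / (n · 2^n), where H_n^{(k)} denotes the generalized harmonic numbers; both series converge. -/

import Mathlib

open Filter
open Finset

noncomputable def dOp (f : ℕ → ℝ) : ℕ → ℝ := fun j => f j - f (j + 1)

lemma dOp_iter_succ' (f : ℕ → ℝ) (n : ℕ) : dOp^[n+1] f = dOp (dOp^[n] f) :=
  Function.iterate_succ_apply' dOp n f

lemma dOp_iter_succ (f : ℕ → ℝ) (n : ℕ) : dOp^[n+1] f = dOp^[n] (dOp f) :=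
  Function.iterate_succ_apply dOp n f

lemma dOp_iter_add (u v : ℕ → ℝ) (n : ℕ) :
    dOp^[n] (fun j => u j + v j) = fun j => dOp^[n] u j + dOp^[n] v j := by
  induction n generalizing u v with
  | zero => rfl
  | succ n ih =>
      rw [dOp_iter_succ, dOp_iter_succ, dOp_iter_succ]
      have : dOp (fun j => u j + v j) = fun j => dOp u j + dOp v j := by
        funext j; simp [dOp]; ring
      rw [this, ih]

lemma dOp_iter_shift (f : ℕ → ℝ) (n : ℕ) :
    dOp^[n] (fun j => f (j+1)) = fun j => dOp^[n] f (j+1) := by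
  induction n generalizing f with
  | zero => rfl
  | succ n ih =>
      rw [dOp_iter_succ, dOp_iter_succ]
      have : dOp (fun j => f (j+1)) = fun j => dOp f (j+1) := by
        funext j; simp [dOp]
      rw [this, ih]

/-- completely monotone sequences -/
def CM (f : ℕ → ℝ) : Prop := ∀ n j, 0 ≤ dOp^[n] f j

lemma CM.nonneg {f : ℕ → ℝ} (h : CM f) (j : ℕ) : 0 ≤ f j := h 0 j

lemma CM.diff {f : ℕ → ℝ} (h : CM f) : CM (dOp f) := by
  intro n j; rw [← dOp_iter_succ]; exact h (n+1) j

lemma CM.shift {f : ℕ → ℝ} (h : CM f) : CM (fun j => f (j+1)) := by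
  intro n j; rw [dOp_iter_shift]; exact h n (j+1)

lemma CM.antitone {f : ℕ → ℝ} (h : CM f) (n : ℕ) : Antitone (dOp^[n] f) := by
  apply antitone_nat_of_succ_le
  intro j
  have := h (n+1) j
  rw [dOp_iter_succ'] at this
  simp only [dOp] at this
  linarith

lemma CM.mul {f g : ℕ → ℝ} (hf : CM f) (hg : CM g) : CM (fun j => f j * g j) := by
  intro n
  induction n generalizing f g with
  | zero => exact fun j => mul_nonneg (hf.nonneg j) (hg.nonneg j)
  | succ n ih =>
      intro j
      rw [dOp_iter_succ]
      have hd : dOp (fun j => f j * g j) =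
          fun j => (dOp f j * g j) + (f (j+1) * dOp g j) := by
        funext j; simp only [dOp]; ring
      rw [hd, dOp_iter_add]
      exact add_nonneg (ih hf.diff hg j) (ih hf.shift hg.diff j)

noncomputable def cseq (n j : ℕ) : ℝ :=
  (n.factorial : ℝ) / ∏ i ∈ range (n+1), ((j : ℝ) + 1 + i)

lemma prod_pos' (n j : ℕ) : 0 < ∏ i ∈ range (n+1), ((j : ℝ) + 1 + i) := by
  apply Finset.prod_pos
  intro i _
  positivity

lemma cseq_pos (n j : ℕ) : 0 < cseq n j := by
  unfold cseq
  exact div_pos (by positivity) (prod_pos' n j)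

lemma prod_succ_top (n j : ℕ) :
    ∏ i ∈ range (n+2), ((j : ℝ) + 1 + i) =
      (∏ i ∈ range (n+1), ((j : ℝ) + 1 + i)) * ((j : ℝ) + 1 + (n+1)) := by
  rw [prod_range_succ]; push_cast; ring

lemma prod_succ_bot (n j : ℕ) :
    ∏ i ∈ range (n+2), ((j : ℝ) + 1 + i) =
      (∏ i ∈ range (n+1), (((j:ℕ)+1 : ℝ) + 1 + i)) * ((j : ℝ) + 1) := by
  rw [prod_range_succ']
  push_cast
  rw [add_zero]
  congr 1
  apply Finset.prod_congr rfl
  intro i _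
  push_cast; ring

lemma dOp_cseq (n : ℕ) : dOp (cseq n) = cseq (n+1) := by
  funext j
  simp only [dOp, cseq]
  have hP := prod_pos' n j
  have hPs := prod_pos' n (j+1)
  have hP2 := prod_pos' (n+1) j
  have h1 : ∏ i ∈ range (n+1+1), ((j : ℝ) + 1 + i) =
      (∏ i ∈ range (n+1), ((j : ℝ) + 1 + i)) * ((j : ℝ) + 1 + (n+1)) := prod_succ_top n j
  have h2 : ∏ i ∈ range (n+1+1), ((j : ℝ) + 1 + i) =
      (∏ i ∈ range (n+1), (((j:ℕ)+1 : ℝ) + 1 + i)) * ((j : ℝ) + 1) := prod_succ_bot n j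
  rw [h1] at hP2 ⊢
  rw [Nat.factorial_succ]
  push_cast
  have hne1 : (∏ i ∈ range (n+1), ((j : ℝ) + 1 + i)) ≠ 0 := ne_of_gt hP
  have hne2 : (∏ i ∈ range (n+1), (((j:ℕ)+1 : ℝ) + 1 + i)) ≠ 0 := by
    push_cast at hPs ⊢
    exact ne_of_gt hPs
  have hj1 : ((j:ℝ) + 1) ≠ 0 := by positivity
  have hjn : ((j:ℝ) + 1 + ((n:ℝ)+1)) ≠ 0 := by positivity
  -- use h2 to replace the shifted product
  have key : (∏ i ∈ range (n+1), (((j:ℕ)+1 : ℝ) + 1 + i)) =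
      (∏ i ∈ range (n+1), ((j : ℝ) + 1 + i)) * ((j : ℝ) + 1 + (n+1)) / ((j : ℝ) + 1) := by
    rw [eq_div_iff hj1, ← h2, h1]
  push_cast at key ⊢
  rw [key]
  field_simp
  ring
lemma diff_formula (n : ℕ) : ∀ f : ℕ → ℝ,
    dOp^[n] f 0 = ∑ i ∈ range (n+1), (-1:ℝ)^i * (n.choose i) * f i := by
  induction n with
  | zero => intro f; simp
  | succ n ih =>
      intro f
      rw [dOp_iter_succ, ih (dOp f)]
      have hT : ∑ i ∈ range (n+1+1), (-1:ℝ)^i * (((n+1).choose i : ℕ)) * f i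
          = ∑ i ∈ range (n+1), (-1:ℝ)^(i+1) * (((n+1).choose (i+1) : ℕ)) * f (i+1) + f 0 := by
        rw [Finset.sum_range_succ']
        simp
      rw [hT]
      have hexp : ∀ i ∈ range (n+1),
          (-1:ℝ)^(i+1) * (((n+1).choose (i+1) : ℕ)) * f (i+1)
          = -((-1:ℝ)^i * (n.choose i) * f (i+1)) + (-1:ℝ)^(i+1) * (n.choose (i+1)) * f (i+1) := by
        intro i _
        rw [Nat.choose_succ_succ, pow_succ]
        push_cast
        ring
      rw [Finset.sum_congr rfl hexp, Finset.sum_add_distrib, Finset.sum_neg_distrib]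
      have hmul : ∀ i ∈ range (n+1),
          (-1:ℝ)^i * (n.choose i) * (dOp f i)
          = (-1:ℝ)^i * (n.choose i) * f i - (-1:ℝ)^i * (n.choose i) * f (i+1) := by
        intro i _
        simp only [dOp]
        ring
      rw [Finset.sum_congr rfl hmul, Finset.sum_sub_distrib]
      have hA : ∑ i ∈ range (n+1), (-1:ℝ)^i * (n.choose i) * f i
          = ∑ i ∈ range n, (-1:ℝ)^(i+1) * (n.choose (i+1)) * f (i+1) + f 0 := by
        rw [Finset.sum_range_succ']
        simp
      have hB : ∑ i ∈ range (n+1), (-1:ℝ)^(i+1) * (n.choose (i+1)) * f (i+1)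
          = ∑ i ∈ range n, (-1:ℝ)^(i+1) * (n.choose (i+1)) * f (i+1) := by
        rw [Finset.sum_range_succ]
        simp
      rw [hA, hB]
      ring

lemma dOp_iter_h (n : ℕ) : dOp^[n] (fun j => 1/((j:ℝ)+1)) = cseq n := by
  induction n with
  | zero =>
      funext j
      simp [cseq]
  | succ n ih => rw [dOp_iter_succ', ih, dOp_cseq]

lemma CM_h : CM (fun j => 1/((j:ℝ)+1)) := by
  intro n j
  rw [dOp_iter_h]
  exact (cseq_pos n j).le

lemma dOp_iter_zero_fun (n : ℕ) : dOp^[n] (fun _ => (0:ℝ)) = fun _ => 0 := by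
  induction n with
  | zero => rfl
  | succ n ih =>
      rw [dOp_iter_succ']
      rw [ih]
      funext j
      simp [dOp]

lemma CM_one : CM (fun _ => (1:ℝ)) := by
  intro n j
  cases n with
  | zero => norm_num
  | succ n =>
      rw [dOp_iter_succ]
      have : dOp (fun _ => (1:ℝ)) = fun _ => (0:ℝ) := by funext j; simp [dOp]
      rw [this, dOp_iter_zero_fun]

lemma CM_hpow (k : ℕ) : CM (fun j => (1/((j:ℝ)+1))^k) := by
  induction k with
  | zero => simpa using CM_one
  | succ k ih =>
      have : (fun j : ℕ => ((1:ℝ)/((j:ℝ)+1))^(k+1))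
          = fun j : ℕ => ((1:ℝ)/((j:ℝ)+1)) * ((1:ℝ)/((j:ℝ)+1))^k := by
        funext j; rw [pow_succ]; ring
      rw [this]
      exact CM_h.mul ih

/-- The generalized harmonic numbers: `genH k n = H_n^{(k)}`, defined by `H_n^{(0)} = 1`
and `H_n^{(k)} = ∑_{j=1}^{n} H_j^{(k−1)}/j` for `k ≥ 1`. -/
noncomputable def genH : ℕ → ℕ → ℝ
  | 0, _ => 1
  | (k+1), n => ∑ j ∈ Finset.Icc 1 n, genH k j / (j : ℝ)

noncomputable def U (r N : ℕ) : ℝ :=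
  ∑ i ∈ range N, (-1:ℝ)^i * ((N.choose (i+1) : ℕ)) / ((i:ℝ)+1)^r

lemma U_zero (N : ℕ) (hN : 1 ≤ N) : U 0 N = 1 := by
  have h := Int.alternating_sum_range_choose (n := N)
  rw [if_neg (by omega)] at h
  have hr : (∑ i ∈ range (N+1), (-1:ℝ)^i * (N.choose i)) = 0 := by
    exact_mod_cast congrArg (Int.cast : ℤ → ℝ) h
  rw [Finset.sum_range_succ'] at hr
  simp only [pow_zero, Nat.choose_zero_right, Nat.cast_one, one_mul] at hr
  unfold U
  simp only [pow_zero, div_one]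
  have : ∑ i ∈ range N, (-1:ℝ)^(i+1) * (N.choose (i+1)) = -1 := by linarith
  have h2 : ∑ i ∈ range N, (-1:ℝ)^i * (N.choose (i+1))
      = -∑ i ∈ range N, (-1:ℝ)^(i+1) * (N.choose (i+1)) := by
    rw [← Finset.sum_neg_distrib]
    apply Finset.sum_congr rfl
    intro i _
    rw [pow_succ]
    ring
  rw [h2, this]
  norm_num

lemma G1 (r n : ℕ) :
    ∑ i ∈ range (n+1), (-1:ℝ)^i * (n.choose i) / ((i:ℝ)+1)^(r+1)
      = U r (n+1) / ((n:ℝ)+1) := by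
  unfold U
  rw [Finset.sum_div]
  apply Finset.sum_congr rfl
  intro i _
  have h := Nat.add_one_mul_choose_eq n i
  have hc : ((n:ℝ)+1) * (n.choose i) = ((n+1).choose (i+1) : ℕ) * ((i:ℝ)+1) := by
    exact_mod_cast h
  have hi : ((i:ℝ)+1) ≠ 0 := by positivity
  have hn : ((n:ℝ)+1) ≠ 0 := by positivity
  have hip : (((i:ℝ)+1)^r) ≠ 0 := by positivity
  rw [pow_succ, div_div]
  rw [div_eq_div_iff (by positivity) (by positivity)]
  linear_combination ((-1:ℝ)^i * ((i:ℝ)+1)^r) * hc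

lemma U_succ_succ (r N : ℕ) :
    U (r+1) (N+1) = U (r+1) N + U r (N+1) / ((N:ℝ)+1) := by
  rw [← G1 r N]
  unfold U
  have hext : ∑ i ∈ range N, (-1:ℝ)^i * ((N.choose (i+1) : ℕ)) / ((i:ℝ)+1)^(r+1)
      = ∑ i ∈ range (N+1), (-1:ℝ)^i * ((N.choose (i+1) : ℕ)) / ((i:ℝ)+1)^(r+1) := by
    rw [Finset.sum_range_succ]
    simp
  rw [hext, ← Finset.sum_add_distrib]
  apply Finset.sum_congr rfl
  intro i _
  rw [Nat.choose_succ_succ]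
  push_cast
  ring

lemma U_rec (r N : ℕ) : U (r+1) N = ∑ j ∈ Finset.Icc 1 N, U r j / (j:ℝ) := by
  induction N with
  | zero => simp [U]
  | succ N ih =>
      rw [Finset.sum_Icc_succ_top (by omega : 1 ≤ N + 1), ← ih, U_succ_succ]
      push_cast
      ring

lemma U_eq_genH (r : ℕ) : ∀ N, 1 ≤ N → U r N = genH r N := by
  induction r with
  | zero =>
      intro N hN
      rw [U_zero N hN]
      rfl
  | succ r ih =>
      intro N _
      rw [U_rec]
      show _ = ∑ j ∈ Finset.Icc 1 N, genH r j / (j : ℝ)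
      apply Finset.sum_congr rfl
      intro j hj
      rw [ih j (Finset.mem_Icc.mp hj).1]

/-! ### Analytic part -/

lemma euler_step_identity (f : ℕ → ℝ) (N : ℕ) :
    ∑ j ∈ range N, (-1:ℝ)^j * dOp f j
      = 2 * ∑ j ∈ range N, (-1:ℝ)^j * f j - f 0 + (-1:ℝ)^N * f N := by
  induction N with
  | zero => simp
  | succ N ih =>
      rw [Finset.sum_range_succ, Finset.sum_range_succ, ih, pow_succ]
      simp only [dOp]
      ring

lemma tendsto_dOp_zero {f : ℕ → ℝ} (h : Tendsto f atTop (nhds 0)) :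
    Tendsto (dOp f) atTop (nhds 0) := by
  have hs : Tendsto (fun j => f (j+1)) atTop (nhds 0) :=
    h.comp (tendsto_add_atTop_nat 1)
  have := h.sub hs
  simp only [sub_zero] at this
  exact this

lemma euler_step {f : ℕ → ℝ} {S : ℝ}
    (hf : Tendsto (fun N => ∑ j ∈ range N, (-1:ℝ)^j * f j) atTop (nhds S))
    (h0 : Tendsto f atTop (nhds 0)) :
    Tendsto (fun N => ∑ j ∈ range N, (-1:ℝ)^j * dOp f j) atTop (nhds (2*S - f 0)) := by
  have hI : (fun N => ∑ j ∈ range N, (-1:ℝ)^j * dOp f j)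
      = fun N => 2 * ∑ j ∈ range N, (-1:ℝ)^j * f j - f 0 + (-1:ℝ)^N * f N :=
    funext (euler_step_identity f)
  rw [hI]
  have h1 : Tendsto (fun N => (-1:ℝ)^N * f N) atTop (nhds 0) := by
    refine squeeze_zero_norm (fun n => ?_) (a := fun N => |f N|) (by simpa using h0.abs)
    simp [abs_mul]
  have h2 := ((hf.const_mul 2).sub_const (f 0)).add h1
  simpa using h2

/-- For every integer `k ≥ 1`,
`∑_{j=1}^{∞} (−1)^{j−1}/j^k = ∑_{n=1}^{∞} H_n^{(k−1)}/(n·2^n)`; both series converge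
(the left-hand, possibly conditionally convergent, series as a limit of partial sums). -/
theorem stmt6 (k : ℕ) (hk : 1 ≤ k) :
    Summable (fun n : ℕ => genH (k - 1) (n + 1) / (((n : ℝ) + 1) * 2 ^ (n + 1))) ∧
    Tendsto (fun N => ∑ j ∈ Finset.range N, (-1 : ℝ) ^ j / ((j : ℝ) + 1) ^ k) atTop
      (nhds (∑' n : ℕ, genH (k - 1) (n + 1) / (((n : ℝ) + 1) * 2 ^ (n + 1)))) := by
  obtain ⟨r, rfl⟩ : ∃ r, k = r + 1 := ⟨k - 1, by omega⟩
  set a : ℕ → ℝ := fun j => (1/((j:ℝ)+1))^(r+1) with ha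
  have hCM : CM a := CM_hpow (r+1)
  have ha0 : a 0 = 1 := by simp [ha]
  set b : ℕ → ℝ := fun n => dOp^[n] a 0 / 2^(n+1) with hb
  have hkey : ∀ n : ℕ, genH r (n+1) = ((n:ℝ)+1) * dOp^[n] a 0 := by
    intro n
    have h1 : dOp^[n] a 0
        = ∑ i ∈ range (n+1), (-1:ℝ)^i * (n.choose i) / ((i:ℝ)+1)^(r+1) := by
      rw [diff_formula n a]
      apply Finset.sum_congr rfl
      intro i _
      simp only [ha]
      rw [div_pow, one_pow, mul_one_div]
    rw [h1, G1, U_eq_genH r (n+1) (by omega)]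
    have hn : ((n:ℝ)+1) ≠ 0 := by positivity
    field_simp
  have hbeq : (fun n : ℕ => genH (r + 1 - 1) (n + 1) / (((n : ℝ) + 1) * 2 ^ (n + 1))) = b := by
    funext n
    have hn : ((n:ℝ)+1) ≠ 0 := by positivity
    rw [Nat.add_sub_cancel, hkey n, hb]
    rw [mul_div_mul_left _ _ hn]
  have hnn : ∀ n j, 0 ≤ dOp^[n] a j := hCM
  have hle1 : ∀ n, dOp^[n] a 0 ≤ 1 := by
    intro n
    induction n with
    | zero => simp [ha0]
    | succ n ih =>
        have h := hnn n 1
        have h2 : dOp^[n+1] a 0 = dOp^[n] a 0 - dOp^[n] a 1 := by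
          rw [dOp_iter_succ']; rfl
        linarith
  have hbsum : Summable b := by
    apply Summable.of_nonneg_of_le (fun n => div_nonneg (hnn n 0) (by positivity))
      (fun n => ?_) summable_geometric_two
    rw [div_le_iff₀ (by positivity : (0:ℝ) < 2^(n+1))]
    have hm : ((1:ℝ)/2)^n * 2^(n+1) = 2 := by
      rw [div_pow, one_pow, pow_succ]
      field_simp
    rw [hm]
    linarith [hle1 n]
  have haz : Tendsto a atTop (nhds 0) := by
    have h1 : Tendsto (fun j : ℕ => (1:ℝ)/((j:ℝ)+1)) atTop (nhds 0) :=
      tendsto_one_div_add_atTop_nhds_zero_nat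
    have h2 := h1.pow (r+1)
    rw [zero_pow (Nat.succ_ne_zero r)] at h2
    exact h2
  have hdz : ∀ n, Tendsto (dOp^[n] a) atTop (nhds 0) := by
    intro n
    induction n with
    | zero => simpa using haz
    | succ n ih =>
        rw [dOp_iter_succ']
        exact tendsto_dOp_zero ih
  have hanti : ∀ n, Antitone (dOp^[n] a) := hCM.antitone
  have hantia : Antitone a := by simpa using hanti 0
  obtain ⟨L, hL⟩ := hantia.tendsto_alternating_series_of_tendsto_zero haz
  have hs : ∀ n, Tendsto (fun N => ∑ j ∈ range N, (-1:ℝ)^j * dOp^[n] a j) atTop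
      (nhds (2^n * (L - ∑ m ∈ range n, b m))) := by
    intro n
    induction n with
    | zero => simpa using hL
    | succ n ih =>
        have step := euler_step ih (hdz n)
        have hval : 2 * (2^n * (L - ∑ m ∈ range n, b m)) - dOp^[n] a 0
            = 2^(n+1) * (L - ∑ m ∈ range (n+1), b m) := by
          rw [Finset.sum_range_succ, hb]
          simp only []
          have h2 : (2:ℝ)^(n+1) ≠ 0 := by positivity
          field_simp
          ring
        rw [hval] at step
        have hfun : (fun N => ∑ j ∈ range N, (-1:ℝ)^j * dOp (dOp^[n] a) j)
            = fun N => ∑ j ∈ range N, (-1:ℝ)^j * dOp^[n+1] a j := by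
          rw [← dOp_iter_succ']
        rw [hfun] at step
        exact step
  have hs_lb : ∀ n, 0 ≤ 2^n * (L - ∑ m ∈ range n, b m) := by
    intro n
    have h := Antitone.alternating_series_le_tendsto (hs n) (hanti n) 0
    simpa using h
  have hs_ub : ∀ n, 2^n * (L - ∑ m ∈ range n, b m) ≤ 1 := by
    intro n
    have h := Antitone.tendsto_le_alternating_series (hs n) (hanti n) 0
    simp only [mul_zero, zero_add, Finset.sum_range_one, pow_zero, one_mul] at h
    exact h.trans (hle1 n)
  have hto : Tendsto (fun n => ∑ m ∈ range n, b m) atTop (nhds L) := by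
    have hdist : ∀ n, ‖∑ m ∈ range n, b m - L‖ ≤ (1/2)^n := by
      intro n
      have h1 := hs_lb n
      have h2 := hs_ub n
      have hp : (0:ℝ) < 2^n := by positivity
      have hmul : (2:ℝ)^n * (1/2)^n = 1 := by
        rw [div_pow, one_pow]
        field_simp
      have hhp : (0:ℝ) ≤ ((1:ℝ)/2)^n := by positivity
      rw [Real.norm_eq_abs, abs_le]
      constructor
      · nlinarith
      · nlinarith
    have h0 : Tendsto (fun n => ∑ m ∈ range n, b m - L) atTop (nhds 0) :=
      squeeze_zero_norm hdist
        (tendsto_pow_atTop_nhds_zero_of_lt_one (by norm_num) (by norm_num))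
    have h3 := h0.add_const L
    simpa using h3
  have htsum : ∑' n, b n = L := tendsto_nhds_unique hbsum.hasSum.tendsto_sum_nat hto
  constructor
  · rw [hbeq]
    exact hbsum
  · have hfun2 : (fun N => ∑ j ∈ Finset.range N, (-1:ℝ)^j / ((j:ℝ)+1)^(r+1))
        = fun N => ∑ j ∈ range N, (-1:ℝ)^j * a j := by
      funext N
      apply Finset.sum_congr rfl
      intro j _
      simp only [ha]
      rw [div_pow, one_pow, mul_one_div]
    rw [hbeq, htsum, hfun2]
    exact hL
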